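/- For the nondeterminism signature and observations, the function π_d defined by π_d o = atom (o, o) is an α-decomposition, and its dual λ o. dualTest (π_d o) (which equals π_d, since dualTest (atom (o, o)) = atom (o, o)) is a β-decomposition; consequently the triple (O, π_leaf, π_node) for nondeterminism is strongly decomposable. -/

import Mathlib

set_option autoImplicit false

universe u v w

/-! ### Tests -/

inductive Test (A : Type u) : Type u
  | atom (a : A)
  | tru
  | fls
  | and (t₁ t₂ : Test A)
  | or (t₁ t₂ : Test A)
  | all (ts : ℕ → Test A)
  | ex (ts : ℕ → Test A)

/-- Interpretation of tests as types. -/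
def liftTest {A : Type u} (P : A → Type w) : Test A → Type w
  | .atom a => P a
  | .tru => PUnit
  | .fls => PEmpty
  | .and t₁ t₂ => liftTest P t₁ × liftTest P t₂
  | .or t₁ t₂ => liftTest P t₁ ⊕ liftTest P t₂
  | .all ts => (n : ℕ) → liftTest P (ts n)
  | .ex ts => (n : ℕ) × liftTest P (ts n)

def mapTest {A : Type u} {B : Type v} (f : A → B) : Test A → Test B
  | .atom a => .atom (f a)
  | .tru => .tru
  | .fls => .fls
  | .and t₁ t₂ => .and (mapTest f t₁) (mapTest f t₂)
  | .or t₁ t₂ => .or (mapTest f t₁) (mapTest f t₂)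
  | .all ts => .all (fun n => mapTest f (ts n))
  | .ex ts => .ex (fun n => mapTest f (ts n))

/-- The dual of a test. -/
def dualTest {A : Type u} : Test A → Test A
  | .atom a => .atom a
  | .tru => .fls
  | .fls => .tru
  | .and t₁ t₂ => .or (dualTest t₁) (dualTest t₂)
  | .or t₁ t₂ => .and (dualTest t₁) (dualTest t₂)
  | .all ts => .ex (fun n => dualTest (ts n))
  | .ex ts => .all (fun n => dualTest (ts n))

/-! ### Coinductive trees, as an M-type -/

def CTreeP (K : Type) (I : K → Type) (A : Type v) : PFunctor.{v} :=
  ⟨A ⊕ ULift.{v} K, Sum.elim (fun _ => PEmpty.{v+1}) (fun k => ULift.{v} (I k.down))⟩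

/-- Coinductive trees with `A`-labelled leaves and `K`-labelled nodes of arity `I k`. -/
def CTree (K : Type) (I : K → Type) (A : Type v) : Type v := (CTreeP K I A).M

namespace CTree

variable {K : Type} {I : K → Type} {A : Type v}

def leaf (a : A) : CTree K I A :=
  PFunctor.M.mk ⟨Sum.inl a, fun e => e.elim⟩

def node (k : K) (ts : I k → CTree K I A) : CTree K I A :=
  PFunctor.M.mk ⟨Sum.inr ⟨k⟩, fun i => ts i.down⟩

/-- Monad multiplication on trees: `mu (leaf t) = t`, `mu (node k ts) = node k (mu ∘ ts)`. -/
def mu (d : CTree K I (CTree K I A)) : CTree K I A :=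
  PFunctor.M.corec
    (fun (s : CTree K I (CTree K I A) ⊕ CTree K I A) =>
      match s with
      | Sum.inl d' =>
          match PFunctor.M.dest d' with
          | ⟨Sum.inl t, _⟩ =>
              (match PFunctor.M.dest t with
              | ⟨Sum.inl a, _⟩ => ⟨Sum.inl a, fun e => e.elim⟩
              | ⟨Sum.inr k, ts⟩ => ⟨Sum.inr k, fun i => Sum.inr (ts i)⟩)
          | ⟨Sum.inr k, ds⟩ => ⟨Sum.inr k, fun i => Sum.inl (ds i)⟩
      | Sum.inr t =>
          match PFunctor.M.dest t with
          | ⟨Sum.inl a, _⟩ => ⟨Sum.inl a, fun e => e.elim⟩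
          | ⟨Sum.inr k, ts⟩ => ⟨Sum.inr k, fun i => Sum.inr (ts i)⟩)
    (Sum.inl d)

end CTree
/-! ### The inductive predicate lifting α -/

section PredLift

variable {K : Type} {I : K → Type} {O : Type}

mutual
  /-- The inductive algebra `α`, parametrized directly by the leaf predicate `P`:
      `Alpha πl πn P o t` corresponds to `α o (mapTree P t)` in the paper. -/
  inductive Alpha {K : Type} {I : K → Type} {O : Type}
      (πl : O → Bool) (πn : (k : K) → O → Test (I k × O))
      {A : Type v} (P : A → Type w) : O → CTree K I A → Type (max v w)
    | leaf {o : O} {a : A} (b : πl o = true) (p : P a) :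
        Alpha πl πn P o (CTree.leaf a)
    | node {o : O} {k : K} {Ps : I k → CTree K I A}
        (ps : AlphaT πl πn P (πn k o) Ps) :
        Alpha πl πn P o (CTree.node k Ps)

  /-- Inductive presentation of `liftTest (fun (x, o') => Alpha πl πn P o' (Ps x)) s`. -/
  inductive AlphaT {K : Type} {I : K → Type} {O : Type}
      (πl : O → Bool) (πn : (k : K) → O → Test (I k × O))
      {A : Type v} (P : A → Type w) :
      {k : K} → Test (I k × O) → (I k → CTree K I A) → Type (max v w)
    | atom {k : K} {x : I k} {o : O} {Ps : I k → CTree K I A}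
        (p : Alpha πl πn P o (Ps x)) : AlphaT πl πn P (.atom (x, o)) Ps
    | tru {k : K} {Ps : I k → CTree K I A} : AlphaT πl πn P .tru Ps
    | and {k : K} {t₁ t₂ : Test (I k × O)} {Ps : I k → CTree K I A}
        (p₁ : AlphaT πl πn P t₁ Ps) (p₂ : AlphaT πl πn P t₂ Ps) :
        AlphaT πl πn P (.and t₁ t₂) Ps
    | orl {k : K} {t₁ t₂ : Test (I k × O)} {Ps : I k → CTree K I A}
        (p : AlphaT πl πn P t₁ Ps) : AlphaT πl πn P (.or t₁ t₂) Ps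
    | orr {k : K} {t₁ t₂ : Test (I k × O)} {Ps : I k → CTree K I A}
        (p : AlphaT πl πn P t₂ Ps) : AlphaT πl πn P (.or t₁ t₂) Ps
    | all {k : K} {ts : ℕ → Test (I k × O)} {Ps : I k → CTree K I A}
        (ps : (n : ℕ) → AlphaT πl πn P (ts n) Ps) : AlphaT πl πn P (.all ts) Ps
    | ex {k : K} {ts : ℕ → Test (I k × O)} {Ps : I k → CTree K I A}
        (n : ℕ) (p : AlphaT πl πn P (ts n) Ps) : AlphaT πl πn P (.ex ts) Ps
end

/-- The inductive `O`-indexed predicate lifting. -/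
def liftTree (πl : O → Bool) (πn : (k : K) → O → Test (I k × O))
    (o : O) {A : Type v} (P : A → Type w) (t : CTree K I A) : Type (max v w) :=
  Alpha πl πn P o t

/-! ### The coinductive predicate lifting β, encoded as an M-type of raw proof
trees carrying a (coinductively defined) well-formedness invariant. -/

/-- Selections through a test: the container shapes of `liftTest`. -/
inductive Sel {X : Type} : Test X → Type
  | atom (x : X) : Sel (.atom x)
  | tru : Sel .tru
  | and {t₁ t₂ : Test X} (c₁ : Sel t₁) (c₂ : Sel t₂) : Sel (.and t₁ t₂)
  | orl {t₁ t₂ : Test X} (c : Sel t₁) : Sel (.or t₁ t₂)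
  | orr {t₁ t₂ : Test X} (c : Sel t₂) : Sel (.or t₁ t₂)
  | all {ts : ℕ → Test X} (cs : (n : ℕ) → Sel (ts n)) : Sel (.all ts)
  | ex {ts : ℕ → Test X} (n : ℕ) (c : Sel (ts n)) : Sel (.ex ts)

/-- The atoms reached by a selection, with their labels:
`liftTest Q s ≃ Σ c : Sel s, ∀ x, Sel.At c x → Q x`. -/
inductive Sel.At {X : Type} : {s : Test X} → Sel s → X → Type
  | atom (x : X) : Sel.At (.atom x) x
  | andl {t₁ t₂ : Test X} {c₁ : Sel t₁} {c₂ : Sel t₂} {x : X}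
      (h : Sel.At c₁ x) : Sel.At (.and c₁ c₂) x
  | andr {t₁ t₂ : Test X} {c₁ : Sel t₁} {c₂ : Sel t₂} {x : X}
      (h : Sel.At c₂ x) : Sel.At (.and c₁ c₂) x
  | orl {t₁ t₂ : Test X} {c : Sel t₁} {x : X}
      (h : Sel.At c x) : Sel.At (.orl (t₂ := t₂) c) x
  | orr {t₁ t₂ : Test X} {c : Sel t₂} {x : X}
      (h : Sel.At c x) : Sel.At (.orr (t₁ := t₁) c) x
  | all {ts : ℕ → Test X} {cs : (n : ℕ) → Sel (ts n)} (n : ℕ) {x : X}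
      (h : Sel.At (cs n) x) : Sel.At (.all cs) x
  | ex {ts : ℕ → Test X} {n : ℕ} {c : Sel (ts n)} {x : X}
      (h : Sel.At c x) : Sel.At (.ex n c) x

variable (πl : O → Bool) (πn : (k : K) → O → Test (I k × O))

/-- Shapes of raw proof trees for the coinductive lifting specified by `(πl, πn)`:
either leaf evidence (a proof of the leaf predicate, or evidence that the
observation is not correct for termination), or a selection through the test
at a node. -/
def BetaShape {A : Type v} (P : A → Type w) : Type (max v w) :=
  (Σ' (o : O) (a : A), PSum (P a) (πl o = false)) ⊕ (Σ' (k : K) (o : O), Sel (πn k o))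

end PredLift
section Beta

variable {K : Type} {I : K → Type} {O : Type}
variable (πl : O → Bool) (πn : (k : K) → O → Test (I k × O))

/-- The polynomial functor of raw proof trees for the coinductive lifting. -/
def BetaPF {A : Type v} (P : A → Type w) : PFunctor.{max v w} :=
  ⟨BetaShape πl πn P,
   Sum.elim (fun _ => PEmpty.{(max v w)+1})
     (fun s => ULift.{max v w} ((x : I s.1 × O) × Sel.At s.2.2 x))⟩

/-- Raw (coinductive) proof trees for the coinductive lifting. -/
def BetaPf {A : Type v} (P : A → Type w) : Type (max v w) := (BetaPF πl πn P).M

/-- One step of well-formedness of a raw proof tree with respect to an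
observation and a tree. -/
def BetaWFStep {A : Type v} (P : A → Type w)
    (R : BetaPf πl πn P → O → CTree K I A → Prop)
    (pf : BetaPf πl πn P) (o : O) (t : CTree K I A) : Prop :=
  match PFunctor.M.dest pf, PFunctor.M.dest t with
  | ⟨Sum.inl ⟨o', a', _⟩, _⟩, ⟨Sum.inl a, _⟩ => o' = o ∧ a' = a
  | ⟨Sum.inr ⟨k', o', c⟩, ch⟩, ⟨Sum.inr k, ts⟩ =>
      o' = o ∧ ∃ h : k' = k.down,
        ∀ (x : I k' × O) (hx : Sel.At c x),
          R (ch ⟨⟨x, hx⟩⟩) x.2 (ts ⟨h ▸ x.1⟩)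
  | _, _ => False

/-- Well-formedness (the coinductive component of `β`), as a greatest fixed
point: an invariant closed under one-step unfolding. -/
def BetaWF {A : Type v} (P : A → Type w)
    (pf : BetaPf πl πn P) (o : O) (t : CTree K I A) : Prop :=
  ∃ R : BetaPf πl πn P → O → CTree K I A → Prop,
    (∀ pf o t, R pf o t → BetaWFStep πl πn P R pf o t) ∧ R pf o t

/-- The coinductive algebra `β` specified by `(πl, πn)`, parametrized directly
by the leaf predicate `P`: `Beta πl πn P o t` corresponds to
`β o (mapTree P t)` in the paper. -/
def Beta {A : Type v} (P : A → Type w) (o : O) (t : CTree K I A) : Type (max v w) :=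
  Σ' pf : BetaPf πl πn P, BetaWF πl πn P pf o t

/-- The coinductive `O`-indexed predicate lifting, forming a complementing
pair with `liftTree`: it is specified by `πl` and the dual of `πn`. -/
def coliftTree (o : O) {A : Type v} (P : A → Type w) (t : CTree K I A) : Type (max v w) :=
  Beta πl (fun k o' => dualTest (πn k o')) P o t

end Beta
section Gamma

variable {K : Type} {I : K → Type} {O : Type}

/-- `R`-correctness of a predicate. -/
def RCorrect {A : Type v} (R : A → A → Type u) (f : A → Type) : Type (max v u) :=
  ∀ a b, f a → R a b → f b

variable (πl : O → Bool) (πn : (k : K) → O → Test (I k × O))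

/-- The relation lifting `Γ`. -/
def Gamma {A : Type v} (R : A → A → Type u) (t₀ t₁ : CTree K I A) : Type (max v u 1) :=
  ∀ (f : A → Type), RCorrect R f → ∀ o : O,
    (liftTree πl πn o f t₀ → liftTree πl πn o f t₁) ×
    (coliftTree πl πn o f t₀ → coliftTree πl πn o f t₁)

end Gamma

section Lang

variable (K : Type) (I : K → Type) (O : Type)

inductive Ty : Type
  | nat
  | arrow (σ ρ : Ty)
  | prod (σ ρ : Ty)
  | u (σ : Ty)

def Val : Ty → Type
  | .nat => ℕ
  | .arrow σ ρ => Val σ → CTree K I (Val ρ)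
  | .prod σ ρ => Val σ × Val ρ
  | .u σ => CTree K I (Val σ)

def Cpt (σ : Ty) : Type := CTree K I (Val K I σ)

inductive Srt : Type
  | val
  | cpt

def Tm : Srt → Ty → Type
  | .val, σ => Val K I σ
  | .cpt, σ => Cpt K I σ

mutual
  /-- Behavioural formulae. -/
  inductive Form : Srt → Ty → Type
    | eq (n : ℕ) : Form .val .nat
    | neq (n : ℕ) : Form .val .nat
    | mapsto {σ ρ : Ty} (V : Val K I σ) (φ : Form .cpt ρ) : Form .val (.arrow σ ρ)
    | fst {σ ρ : Ty} (φ : Form .val σ) : Form .val (.prod σ ρ)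
    | snd {σ ρ : Ty} (φ : Form .val ρ) : Form .val (.prod σ ρ)
    | thunk {σ : Ty} (φ : Form .cpt σ) : Form .val (.u σ)
    | test {b : Srt} {σ : Ty} (φs : FTest b σ) : Form b σ
    | obsA {σ : Ty} (o : O) (φ : Form .val σ) : Form .cpt σ
    | obsB {σ : Ty} (o : O) (φ : Form .val σ) : Form .cpt σ

  /-- Tests of formulae: the grammar `Test` instantiated at `Form b σ`
  (inlined, as Lean does not accept the nested occurrence). -/
  inductive FTest : Srt → Ty → Type
    | atom {b : Srt} {σ : Ty} (φ : Form b σ) : FTest b σ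
    | tru {b : Srt} {σ : Ty} : FTest b σ
    | fls {b : Srt} {σ : Ty} : FTest b σ
    | and {b : Srt} {σ : Ty} (t₁ t₂ : FTest b σ) : FTest b σ
    | or {b : Srt} {σ : Ty} (t₁ t₂ : FTest b σ) : FTest b σ
    | all {b : Srt} {σ : Ty} (ts : ℕ → FTest b σ) : FTest b σ
    | ex {b : Srt} {σ : Ty} (ts : ℕ → FTest b σ) : FTest b σ
end

end Lang

section Neg

variable {K : Type} {I : K → Type} {O : Type}

/-- `FTest b σ` realizes `Test (Form b σ)`. -/
def toFTest {b : Srt} {σ : Ty} : Test (Form K I O b σ) → FTest K I O b σ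
  | .atom φ => .atom φ
  | .tru => .tru
  | .fls => .fls
  | .and t₁ t₂ => .and (toFTest t₁) (toFTest t₂)
  | .or t₁ t₂ => .or (toFTest t₁) (toFTest t₂)
  | .all ts => .all (fun n => toFTest (ts n))
  | .ex ts => .ex (fun n => toFTest (ts n))

/-- The formula `test φs` for a test of formulae `φs : Test (Form b σ)`. -/
def Form.mkTest {b : Srt} {σ : Ty} (φs : Test (Form K I O b σ)) : Form K I O b σ :=
  .test (toFTest φs)

mutual
  /-- Negation of formulae. -/
  def negFma : {b : Srt} → {σ : Ty} → Form K I O b σ → Form K I O b σ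
    | _, _, .eq n => .neq n
    | _, _, .neq n => .eq n
    | _, _, .mapsto V φ => .mapsto V (negFma φ)
    | _, _, .fst φ => .fst (negFma φ)
    | _, _, .snd φ => .snd (negFma φ)
    | _, _, .thunk φ => .thunk (negFma φ)
    | _, _, .test φs => .test (negFTest φs)
    | _, _, .obsA o φ => .obsB o (negFma φ)
    | _, _, .obsB o φ => .obsA o (negFma φ)

  /-- The action of `mapTest negFma` on tests of formulae. -/
  def negFTest : {b : Srt} → {σ : Ty} → FTest K I O b σ → FTest K I O b σ
    | _, _, .atom φ => .atom (negFma φ)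
    | _, _, .tru => .tru
    | _, _, .fls => .fls
    | _, _, .and t₁ t₂ => .and (negFTest t₁) (negFTest t₂)
    | _, _, .or t₁ t₂ => .or (negFTest t₁) (negFTest t₂)
    | _, _, .all ts => .all (fun n => negFTest (ts n))
    | _, _, .ex ts => .ex (fun n => negFTest (ts n))
end

end Neg
section Sat

variable {K : Type} {I : K → Type} {O : Type}
variable (πl : O → Bool) (πn : (k : K) → O → Test (I k × O))

mutual
  /-- Satisfaction of formulae by terms: `Sat πl πn φ P` is `P ⊨ φ`. -/
  def Sat : {b : Srt} → {σ : Ty} → Form K I O b σ → Tm K I b σ → Type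
    | _, _, .eq n, m => PLift (m = n)
    | _, _, .neq n, m => PLift (m ≠ n)
    | _, _, .mapsto V φ, W => Sat φ (W V)
    | _, _, .fst φ, p => Sat φ p.1
    | _, _, .snd φ, p => Sat φ p.2
    | _, _, .thunk φ, V => Sat (b := .cpt) φ V
    | _, _, .test φs, P => SatTest φs P
    | _, _, .obsA o φ, M => liftTree πl πn o (fun V => Sat φ V) M
    | _, _, .obsB o φ, M => coliftTree πl πn o (fun V => Sat φ V) M

  /-- Satisfaction of tests of formulae: realizes `liftTest (fun φ => Sat πl πn φ P) φs`. -/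
  def SatTest : {b : Srt} → {σ : Ty} → FTest K I O b σ → Tm K I b σ → Type
    | _, _, .atom φ, P => Sat φ P
    | _, _, .tru, _ => PUnit
    | _, _, .fls, _ => PEmpty
    | _, _, .and t₁ t₂, P => SatTest t₁ P × SatTest t₂ P
    | _, _, .or t₁ t₂, P => SatTest t₁ P ⊕ SatTest t₂ P
    | _, _, .all ts, P => (n : ℕ) → SatTest (ts n) P
    | _, _, .ex ts, P => (n : ℕ) × SatTest (ts n) P
end

end Sat
section Decomp

variable {K : Type} {I : K → Type} {O : Type}
variable (πl : O → Bool) (πn : (k : K) → O → Test (I k × O))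

/-- The algebra `α` on trees of types. -/
def algA (o : O) (t : CTree K I Type) : Type 1 :=
  Alpha πl πn (fun X => X) o t

/-- The algebra `β` on trees of types (as part of the complementing pair, it
is specified by `πl` and the dual of `πn`). -/
def algB (o : O) (t : CTree K I Type) : Type 1 :=
  coliftTree πl πn o (fun X => X) t

/-- The extensional order `⊑` on double trees. -/
def DTLe (d₀ d₁ : CTree K I (CTree K I Type)) : Type 1 :=
  ∀ o₀ o₁ : O,
    (liftTree πl πn o₀ (algA πl πn o₁) d₀ → liftTree πl πn o₀ (algA πl πn o₁) d₁) ×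
    (coliftTree πl πn o₀ (algB πl πn o₁) d₀ → coliftTree πl πn o₀ (algB πl πn o₁) d₁)

/-- The extensional order `⊑` on single trees. -/
def STLe (t₀ t₁ : CTree K I Type) : Type 1 :=
  ∀ o : O, (algA πl πn o t₀ → algA πl πn o t₁) × (algB πl πn o t₀ → algB πl πn o t₁)

/-- Strong decomposability of `(O, πl, πn)`. -/
def StronglyDecomposable : Type 1 :=
  ∀ d₀ d₁ : CTree K I (CTree K I Type),
    DTLe πl πn d₀ d₁ → STLe πl πn (CTree.mu d₀) (CTree.mu d₁)

/-- `πd` is an `α`-decomposition. -/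
def IsAlphaDecomposition (πd : O → Test (O × O)) : Type 1 :=
  ∀ (d : CTree K I (CTree K I Type)) (o : O),
    (algA πl πn o (CTree.mu d) →
      liftTest (fun p => liftTree πl πn p.1 (algA πl πn p.2) d) (πd o)) ×
    (liftTest (fun p => liftTree πl πn p.1 (algA πl πn p.2) d) (πd o) →
      algA πl πn o (CTree.mu d))

/-- `πd` is a `β`-decomposition. -/
def IsBetaDecomposition (πd : O → Test (O × O)) : Type 1 :=
  ∀ (d : CTree K I (CTree K I Type)) (o : O),
    (algB πl πn o (CTree.mu d) →
      liftTest (fun p => coliftTree πl πn p.1 (algB πl πn p.2) d) (πd o)) ×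
    (liftTest (fun p => coliftTree πl πn p.1 (algB πl πn p.2) d) (πd o) →
      algB πl πn o (CTree.mu d))

/-- The formula `(πd o)_α[φ]`. -/
def decompFormA (πd : O → Test (O × O)) (o : O) {τ : Ty} (φ : Form K I O .val τ) :
    Form K I O .cpt (.u τ) :=
  Form.mkTest (mapTest (fun p => .obsA p.1 (.thunk (.obsA p.2 φ))) (πd o))

/-- The formula `(πd o)_β[φ]`. -/
def decompFormB (πd : O → Test (O × O)) (o : O) {τ : Ty} (φ : Form K I O .val τ) :
    Form K I O .cpt (.u τ) :=
  Form.mkTest (mapTest (fun p => .obsB p.1 (.thunk (.obsB p.2 φ))) (πd o))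

end Decomp

section Sim

variable {K : Type} {I : K → Type} {O : Type}
variable (πl : O → Bool) (πn : (k : K) → O → Test (I k × O))

/-- Well-typed relations on terms. -/
def WtRel (K : Type) (I : K → Type) : Type 1 :=
  (b : Srt) → (τ : Ty) → Tm K I b τ → Tm K I b τ → Type

/-- Applicative `Γ`-simulations. -/
structure IsSimulation (R : WtRel K I) : Type 1 where
  natCond : ∀ n m : Tm K I .val .nat, R .val .nat n m → n = m
  arrowCond : ∀ {σ τ : Ty} (V W : Tm K I .val (.arrow σ τ)),
    R .val (.arrow σ τ) V W → ∀ U : Val K I σ, R .cpt τ (V U) (W U)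
  prodCond : ∀ {σ τ : Ty} (V W : Tm K I .val (.prod σ τ)),
    R .val (.prod σ τ) V W → R .val σ V.1 W.1 × R .val τ V.2 W.2
  thunkCond : ∀ {σ : Ty} (V W : Tm K I .val (.u σ)),
    R .val (.u σ) V W → R .cpt σ V W
  cptCond : ∀ {τ : Ty} (M N : Tm K I .cpt τ),
    R .cpt τ M N → Gamma πl πn (R .val τ) M N

/-- Applicative `Γ`-similarity. -/
def AppSimilar {b : Srt} {τ : Ty} (P Q : Tm K I b τ) : Type 1 :=
  Σ R : WtRel K I, IsSimulation πl πn R × R b τ P Q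

/-- Applicative `Γ`-bisimilarity. -/
def Bisimilar {b : Srt} {τ : Ty} (P Q : Tm K I b τ) : Type 1 :=
  Σ R : WtRel K I,
    IsSimulation πl πn R × (∀ b τ P Q, R b τ P Q → R b τ Q P) × R b τ P Q

end Sim

/-- Reflexive-transitive closure of a `Type`-valued relation. -/
inductive RTC {A : Type u} (R : A → A → Type u) : A → A → Type u
  | refl (a : A) : RTC R a a
  | tail {a b c : A} (h : RTC R a b) (h' : R b c) : RTC R a c

/-- Binary arity for the nondeterministic choice operation. -/
inductive LR : Type
  | left
  | right

/-- Observations for nondeterminism. -/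
inductive MM : Type
  | may
  | must

def ndπl : MM → Bool := fun _ => true

def ndπn : (k : Unit) → MM → Test (LR × MM)
  | _, .may => .or (.atom (.left, .may)) (.atom (.right, .may))
  | _, .must => .and (.atom (.left, .must)) (.atom (.right, .must))

/-- The candidate decomposition `π_d o = atom (o, o)` for nondeterminism. -/
def ndπd : MM → Test (MM × MM) := fun o => .atom (o, o)


/-! ### Proof development -/

section NondetProof

namespace CTree

variable {K : Type} {I : K → Type} {A : Type v}

theorem dest_leaf (a : A) :
    PFunctor.M.dest (leaf (K := K) (I := I) a) = ⟨Sum.inl a, fun e => e.elim⟩ :=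
  PFunctor.M.dest_mk _

theorem dest_node (k : K) (ts : I k → CTree K I A) :
    PFunctor.M.dest (node k ts) = ⟨Sum.inr ⟨k⟩, fun i => ts i.down⟩ :=
  PFunctor.M.dest_mk _

theorem eq_of_dest_eq {t u : CTree K I A}
    (h : PFunctor.M.dest t = PFunctor.M.dest u) : t = u := by
  rw [← PFunctor.M.mk_dest t, ← PFunctor.M.mk_dest u, h]

theorem leaf_or_node (t : CTree K I A) :
    (∃ a, t = leaf a) ∨ ∃ k ts, t = node k ts := by
  rcases hd : PFunctor.M.dest t with ⟨s, ch⟩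
  cases s with
  | inl a =>
      left
      refine ⟨a, eq_of_dest_eq ?_⟩
      rw [hd, dest_leaf]
      congr
      funext e
      exact e.elim
  | inr k =>
      right
      exact ⟨k.down, fun i => ch ⟨i⟩, eq_of_dest_eq (hd.trans (dest_node k.down fun i => ch ⟨i⟩).symm)⟩


theorem leaf_ne_node (a : A) (k : K) (ts : I k → CTree K I A) :
    leaf a ≠ node k ts := by
  intro h
  have h2 := congrArg PFunctor.M.dest h
  rw [dest_leaf, dest_node] at h2
  exact absurd (congrArg Sigma.fst h2) (by simp)

theorem node_inj {k : K} {ts ts' : I k → CTree K I A}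
    (h : node k ts = node k ts') : ts = ts' := by
  have h2 := congrArg PFunctor.M.dest h
  rw [dest_node, dest_node] at h2
  injection h2 with h1 h3
  funext i
  exact congrFun h3 ⟨i⟩

/-- The corecursion step function of `mu`. -/
def muF : (CTree K I (CTree K I A) ⊕ CTree K I A) → (CTreeP K I A) (CTree K I (CTree K I A) ⊕ CTree K I A) :=
  fun s =>
    match s with
    | Sum.inl d' =>
        match PFunctor.M.dest d' with
        | ⟨Sum.inl t, _⟩ =>
            (match PFunctor.M.dest t with
            | ⟨Sum.inl a, _⟩ => ⟨Sum.inl a, fun e => e.elim⟩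
            | ⟨Sum.inr k, ts⟩ => ⟨Sum.inr k, fun i => Sum.inr (ts i)⟩)
        | ⟨Sum.inr k, ds⟩ => ⟨Sum.inr k, fun i => Sum.inl (ds i)⟩
    | Sum.inr t =>
        match PFunctor.M.dest t with
        | ⟨Sum.inl a, _⟩ => ⟨Sum.inl a, fun e => e.elim⟩
        | ⟨Sum.inr k, ts⟩ => ⟨Sum.inr k, fun i => Sum.inr (ts i)⟩

theorem mu_def (d : CTree K I (CTree K I A)) :
    mu d = PFunctor.M.corec muF (Sum.inl d) := rfl

theorem corec_muF_inr (t : CTree K I A) :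
    PFunctor.M.corec (muF (A := A)) (Sum.inr t) = t := by
  apply PFunctor.M.bisim (fun x y => x = PFunctor.M.corec muF (Sum.inr y))
  · intro x y hxy
    rcases leaf_or_node y with ⟨a, rfl⟩ | ⟨k, ts, rfl⟩
    · refine ⟨Sum.inl a, fun e => e.elim, fun e => e.elim, ?_, ?_, fun i => i.elim⟩
      · subst hxy
        rw [PFunctor.M.dest_corec]
        rw [show muF (A := A) (Sum.inr (leaf a)) = ⟨Sum.inl a, fun e => e.elim⟩ by
          simp only [muF, dest_leaf]; rfl]
        show (⟨Sum.inl a, _⟩ : (CTreeP K I A) _) = _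
        refine Sigma.ext rfl (heq_of_eq ?_)
        funext e
        exact e.elim
      · rw [dest_leaf]
    · refine ⟨Sum.inr ⟨k⟩, fun i => PFunctor.M.corec muF (Sum.inr (ts i.down)),
        fun i => ts i.down, ?_, dest_node k ts, fun i => rfl⟩
      subst hxy
      rw [PFunctor.M.dest_corec]
      rw [show muF (A := A) (Sum.inr (node k ts)) = ⟨Sum.inr ⟨k⟩, fun i => Sum.inr (ts i.down)⟩ by
        simp only [muF, dest_node]; rfl]
      rfl
  · rfl

theorem mu_leaf (t : CTree K I A) : mu (leaf t) = t := by
  rw [mu_def]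
  rw [show PFunctor.M.corec (muF (A := A)) (Sum.inl (leaf t)) = PFunctor.M.corec muF (Sum.inr t) from
    eq_of_dest_eq (by
      rw [PFunctor.M.dest_corec, PFunctor.M.dest_corec]
      congr 1)]
  exact corec_muF_inr t

theorem mu_node (k : K) (ds : I k → CTree K I (CTree K I A)) :
    mu (node k ds) = node k (fun i => mu (ds i)) := by
  apply eq_of_dest_eq
  rw [mu_def, PFunctor.M.dest_corec, dest_node]
  rfl

end CTree

end NondetProof

namespace NondetProof
open CTree

/-- Prop-level truth of a test. -/
def THolds {X : Type u} (Q : X → Prop) : Test X → Prop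
  | .atom x => Q x
  | .tru => True
  | .fls => False
  | .and t₁ t₂ => THolds Q t₁ ∧ THolds Q t₂
  | .or t₁ t₂ => THolds Q t₁ ∨ THolds Q t₂
  | .all ts => ∀ n, THolds Q (ts n)
  | .ex ts => ∃ n, THolds Q (ts n)

/-- Prop-level version of `Alpha ndπl ndπn`. -/
inductive NA {A : Type v} (Q : A → Prop) : MM → CTree Unit (fun _ => LR) A → Prop
  | leaf {o a} (p : Q a) : NA Q o (CTree.leaf a)
  | mayl {Ps} (p : NA Q .may (Ps .left)) : NA Q .may (CTree.node () Ps)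
  | mayr {Ps} (p : NA Q .may (Ps .right)) : NA Q .may (CTree.node () Ps)
  | must {Ps} (p₁ : NA Q .must (Ps .left)) (p₂ : NA Q .must (Ps .right)) :
      NA Q .must (CTree.node () Ps)

theorem alpha_to_NA {A : Type v} {P : A → Type w} {o : MM} {t : CTree Unit (fun _ => LR) A}
    (h : Alpha ndπl ndπn P o t) : NA (fun a => Nonempty (P a)) o t := by
  refine Alpha.rec (motive_1 := fun o t _ => NA (fun a => Nonempty (P a)) o t)
    (motive_2 := fun {k} s Ps _ => THolds (fun p => NA (fun a => Nonempty (P a)) p.2 (Ps p.1)) s)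
    ?_ ?_ ?_ ?_ ?_ ?_ ?_ ?_ ?_ h
  · intro o a b p; exact NA.leaf ⟨p⟩
  · intro o k Ps ps ih
    match o, ih with
    | .may, Or.inl hl => exact NA.mayl hl
    | .may, Or.inr hr => exact NA.mayr hr
    | .must, ⟨hl, hr⟩ => exact NA.must hl hr
  · intro k x o Ps p ih; exact ih
  · intro k Ps; trivial
  · intro k t₁ t₂ Ps p₁ p₂ ih₁ ih₂; exact ⟨ih₁, ih₂⟩
  · intro k t₁ t₂ Ps p ih; exact Or.inl ih
  · intro k t₁ t₂ Ps p ih; exact Or.inr ih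
  · intro k ts Ps ps ih; exact ih
  · intro k ts Ps n p ih; exact ⟨n, ih⟩

theorem NA_to_alpha {A : Type v} {P : A → Type w} {o : MM} {t : CTree Unit (fun _ => LR) A}
    (h : NA (fun a => Nonempty (P a)) o t) : Nonempty (Alpha ndπl ndπn P o t) := by
  induction h with
  | leaf p => exact p.elim fun q => ⟨Alpha.leaf rfl q⟩
  | mayl _ ih => exact ih.elim fun q => ⟨Alpha.node (AlphaT.orl (AlphaT.atom q))⟩
  | mayr _ ih => exact ih.elim fun q => ⟨Alpha.node (AlphaT.orr (AlphaT.atom q))⟩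
  | must _ _ ih₁ ih₂ =>
      exact ih₁.elim fun q₁ => ih₂.elim fun q₂ =>
        ⟨Alpha.node (AlphaT.and (AlphaT.atom q₁) (AlphaT.atom q₂))⟩

theorem NA_mono {A : Type v} {Q Q' : A → Prop} (hq : ∀ a, Q a → Q' a) :
    ∀ {o t}, NA Q o t → NA Q' o t := by
  intro o t h
  induction h with
  | leaf p => exact NA.leaf (hq _ p)
  | mayl _ ih => exact NA.mayl ih
  | mayr _ ih => exact NA.mayr ih
  | must _ _ ih₁ ih₂ => exact NA.must ih₁ ih₂

theorem NA_mu_fwd {A : Type v} {Q : A → Prop} {o : MM}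
    {d : CTree Unit (fun _ => LR) (CTree Unit (fun _ => LR) A)}
    (h : NA Q o (CTree.mu d)) : NA (fun t => NA Q o t) o d := by
  generalize ht : CTree.mu d = t at h
  induction h generalizing d with
  | @leaf o a p =>
      rcases leaf_or_node d with ⟨t', rfl⟩ | ⟨k, ds, rfl⟩
      · rw [mu_leaf] at ht
        exact NA.leaf (ht ▸ NA.leaf p)
      · rw [mu_node] at ht
        exact ((leaf_ne_node _ _ _) ht.symm).elim
  | @mayl Ps p ih =>
      rcases leaf_or_node d with ⟨t', rfl⟩ | ⟨k, ds, rfl⟩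
      · rw [mu_leaf] at ht
        exact NA.leaf (ht ▸ NA.mayl p)
      · rw [mu_node] at ht
        have hPs := node_inj ht
        exact NA.mayl (ih (congrFun hPs .left))
  | @mayr Ps p ih =>
      rcases leaf_or_node d with ⟨t', rfl⟩ | ⟨k, ds, rfl⟩
      · rw [mu_leaf] at ht
        exact NA.leaf (ht ▸ NA.mayr p)
      · rw [mu_node] at ht
        have hPs := node_inj ht
        exact NA.mayr (ih (congrFun hPs .right))
  | @must Ps p₁ p₂ ih₁ ih₂ =>
      rcases leaf_or_node d with ⟨t', rfl⟩ | ⟨k, ds, rfl⟩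
      · rw [mu_leaf] at ht
        exact NA.leaf (ht ▸ NA.must p₁ p₂)
      · rw [mu_node] at ht
        have hPs := node_inj ht
        exact NA.must (ih₁ (congrFun hPs .left))
          (ih₂ (congrFun hPs .right))

theorem NA_mu_bwd_aux {A : Type v} {Q : A → Prop} {R : CTree Unit (fun _ => LR) A → Prop} :
    ∀ {o : MM} {d : CTree Unit (fun _ => LR) (CTree Unit (fun _ => LR) A)},
      NA R o d → (∀ t', R t' → NA Q o t') → NA Q o (CTree.mu d) := by
  intro o d h
  induction h with
  | leaf p => intro hr; rw [mu_leaf]; exact hr _ p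
  | mayl _ ih => intro hr; rw [mu_node]; exact NA.mayl (ih hr)
  | mayr _ ih => intro hr; rw [mu_node]; exact NA.mayr (ih hr)
  | must _ _ ih₁ ih₂ => intro hr; rw [mu_node]; exact NA.must (ih₁ hr) (ih₂ hr)

theorem NA_mu_bwd {A : Type v} {Q : A → Prop} {o : MM}
    {d : CTree Unit (fun _ => LR) (CTree Unit (fun _ => LR) A)}
    (h : NA (fun t => NA Q o t) o d) : NA Q o (CTree.mu d) :=
  NA_mu_bwd_aux h (fun _ ht => ht)

end NondetProof

namespace NondetProof
open CTree

abbrev CT (A : Type v) : Type v := CTree Unit (fun _ => LR) A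

/-- The dualized node tests for nondeterminism. -/
abbrev ndπnd : (k : Unit) → MM → Test (LR × MM) := fun k o => dualTest (ndπn k o)

/-- One step of the Prop-level version of the coinductive lifting. -/
def NBStep {A : Type v} (Q : A → Prop) (R : MM → CT A → Prop) (o : MM) (t : CT A) : Prop :=
  (∃ a, t = CTree.leaf a ∧ Q a) ∨
  (∃ Ps, t = CTree.node () Ps ∧
    match o with
    | .may => R .may (Ps .left) ∧ R .may (Ps .right)
    | .must => R .must (Ps .left) ∨ R .must (Ps .right))

/-- Prop-level version of `Beta ndπl ndπnd`. -/
def NB {A : Type v} (Q : A → Prop) (o : MM) (t : CT A) : Prop :=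
  ∃ R : MM → CT A → Prop, (∀ o t, R o t → NBStep Q R o t) ∧ R o t

theorem NBStep_mono {A : Type v} {Q : A → Prop} {R R' : MM → CT A → Prop}
    (hR : ∀ o t, R o t → R' o t) {o t} (h : NBStep Q R o t) : NBStep Q R' o t := by
  rcases h with ⟨a, rfl, q⟩ | ⟨Ps, rfl, hb⟩
  · exact Or.inl ⟨a, rfl, q⟩
  · refine Or.inr ⟨Ps, rfl, ?_⟩
    cases o with
    | may => exact ⟨hR _ _ hb.1, hR _ _ hb.2⟩
    | must => exact hb.imp (hR _ _) (hR _ _)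

theorem NB_unfold {A : Type v} {Q : A → Prop} {o t} (h : NB Q o t) :
    NBStep Q (NB Q) o t := by
  obtain ⟨R, hR, hr⟩ := h
  exact NBStep_mono (fun o t hrt => ⟨R, hR, hrt⟩) (hR _ _ hr)

theorem NB_mono {A : Type v} {Q Q' : A → Prop} (hq : ∀ a, Q a → Q' a) {o t}
    (h : NB Q o t) : NB Q' o t := by
  refine ⟨NB Q, fun o t h' => ?_, h⟩
  rcases NB_unfold h' with ⟨a, rfl, q⟩ | ⟨Ps, rfl, hb⟩
  · exact Or.inl ⟨a, rfl, hq _ q⟩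
  · exact Or.inr ⟨Ps, rfl, hb⟩

theorem NB_leaf {A : Type v} {Q : A → Prop} {o a} (q : Q a) : NB Q o (CTree.leaf a) :=
  ⟨fun _ t => ∃ a, t = CTree.leaf a ∧ Q a,
    fun _ _ h => Or.inl h, ⟨a, rfl, q⟩⟩

theorem NB_may {A : Type v} {Q : A → Prop} {Ps : LR → CT A}
    (hl : NB Q .may (Ps .left)) (hr : NB Q .may (Ps .right)) :
    NB Q .may (CTree.node () Ps) := by
  refine ⟨fun o t => NB Q o t ∨ (o = .may ∧ t = CTree.node () Ps), fun o t h' => ?_,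
    Or.inr ⟨rfl, rfl⟩⟩
  rcases h' with h' | ⟨rfl, rfl⟩
  · exact NBStep_mono (fun _ _ => Or.inl) (NB_unfold h')
  · exact Or.inr ⟨Ps, rfl, Or.inl hl, Or.inl hr⟩

theorem NB_mustl {A : Type v} {Q : A → Prop} {Ps : LR → CT A}
    (hl : NB Q .must (Ps .left)) : NB Q .must (CTree.node () Ps) := by
  refine ⟨fun o t => NB Q o t ∨ (o = .must ∧ t = CTree.node () Ps), fun o t h' => ?_,
    Or.inr ⟨rfl, rfl⟩⟩
  rcases h' with h' | ⟨rfl, rfl⟩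
  · exact NBStep_mono (fun _ _ => Or.inl) (NB_unfold h')
  · exact Or.inr ⟨Ps, rfl, Or.inl (Or.inl hl)⟩

theorem NB_mustr {A : Type v} {Q : A → Prop} {Ps : LR → CT A}
    (hr : NB Q .must (Ps .right)) : NB Q .must (CTree.node () Ps) := by
  refine ⟨fun o t => NB Q o t ∨ (o = .must ∧ t = CTree.node () Ps), fun o t h' => ?_,
    Or.inr ⟨rfl, rfl⟩⟩
  rcases h' with h' | ⟨rfl, rfl⟩
  · exact NBStep_mono (fun _ _ => Or.inl) (NB_unfold h')
  · exact Or.inr ⟨Ps, rfl, Or.inr (Or.inl hr)⟩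

theorem NB_mu_fwd {A : Type v} {Q : A → Prop} {o : MM} {d : CT (CT A)}
    (h : NB Q o (CTree.mu d)) : NB (fun t => NB Q o t) o d := by
  refine ⟨fun o' d' => o' = o ∧ NB Q o (CTree.mu d'), fun o' d' h' => ?_, rfl, h⟩
  obtain ⟨rfl, h'⟩ := h'
  rcases leaf_or_node d' with ⟨t', rfl⟩ | ⟨k, ds, rfl⟩
  · exact Or.inl ⟨t', rfl, by rwa [mu_leaf] at h'⟩
  · rw [mu_node] at h'
    rcases NB_unfold h' with ⟨a, ha, _⟩ | ⟨Ps, hPs, hb⟩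
    · exact ((leaf_ne_node _ _ _) ha.symm).elim
    · have hps := node_inj hPs
      refine Or.inr ⟨ds, rfl, ?_⟩
      cases o' with
      | may => exact ⟨⟨rfl, (congrFun hps .left) ▸ hb.1⟩, ⟨rfl, (congrFun hps .right) ▸ hb.2⟩⟩
      | must =>
          rcases hb with h | h
          · exact Or.inl ⟨rfl, (congrFun hps .left) ▸ h⟩
          · exact Or.inr ⟨rfl, (congrFun hps .right) ▸ h⟩

theorem NB_mu_bwd {A : Type v} {Q : A → Prop} {o : MM} {d : CT (CT A)}
    (h : NB (fun t => NB Q o t) o d) : NB Q o (CTree.mu d) := by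
  refine ⟨fun o' t => (o' = o ∧ ∃ d', t = CTree.mu d' ∧ NB (fun t => NB Q o t) o d') ∨ NB Q o' t,
    fun o' t h' => ?_, Or.inl ⟨rfl, d, rfl, h⟩⟩
  rcases h' with ⟨rfl, d', rfl, h'⟩ | h'
  · rcases NB_unfold h' with ⟨t', rfl, q⟩ | ⟨Ps, rfl, hb⟩
    · rw [mu_leaf]
      exact NBStep_mono (fun _ _ => Or.inr) (NB_unfold q)
    · rw [mu_node]
      refine Or.inr ⟨fun i => CTree.mu (Ps i), rfl, ?_⟩
      cases o' with
      | may => exact ⟨Or.inl ⟨rfl, Ps .left, rfl, hb.1⟩, Or.inl ⟨rfl, Ps .right, rfl, hb.2⟩⟩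
      | must =>
          rcases hb with h | h
          · exact Or.inl (Or.inl ⟨rfl, Ps .left, rfl, h⟩)
          · exact Or.inr (Or.inl ⟨rfl, Ps .right, rfl, h⟩)
  · exact NBStep_mono (fun _ _ => Or.inr) (NB_unfold h')

end NondetProof

namespace NondetProof
open CTree

section BetaGeneric

variable {K : Type} {I : K → Type} {O : Type}
variable {πl : O → Bool} {πn : (k : K) → O → Test (I k × O)}
variable {A : Type v} {P : A → Type w}

theorem BetaWFStep_mono {R R' : BetaPf πl πn P → O → CTree K I A → Prop}
    (hR : ∀ pf o t, R pf o t → R' pf o t) {pf o t}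
    (h : BetaWFStep πl πn P R pf o t) : BetaWFStep πl πn P R' pf o t := by
  unfold BetaWFStep at h ⊢
  rcases hpf : PFunctor.M.dest pf with ⟨s, ch⟩
  rcases ht : PFunctor.M.dest t with ⟨s', ch'⟩
  rw [hpf, ht] at h
  rcases s with ⟨o', a', q⟩ | ⟨k', o', c⟩ <;> rcases s' with a | k
  · exact h
  · exact h
  · exact h
  · obtain ⟨ho, hk, hh⟩ := h
    exact ⟨ho, hk, fun x hx => hR _ _ _ (hh x hx)⟩

theorem betaWF_unfold {pf o t} (h : BetaWF πl πn P pf o t) :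
    BetaWFStep πl πn P (BetaWF πl πn P) pf o t := by
  obtain ⟨R, hR, hr⟩ := h
  exact BetaWFStep_mono (fun pf o t h' => ⟨R, hR, h'⟩) (hR _ _ _ hr)

end BetaGeneric

theorem beta_to_NB {A : Type v} {P : A → Type w} {o : MM} {t : CT A}
    (h : Nonempty (Beta ndπl ndπnd P o t)) : NB (fun a => Nonempty (P a)) o t := by
  refine ⟨fun o t => ∃ pf, BetaWF ndπl ndπnd P pf o t, fun o t h' => ?_,
    h.elim fun b => ⟨b.1, b.2⟩⟩
  obtain ⟨pf, hwf⟩ := h'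
  have hstep := betaWF_unfold hwf
  unfold BetaWFStep at hstep
  rcases hpf : PFunctor.M.dest pf with ⟨s, ch⟩
  rcases leaf_or_node t with ⟨a, rfl⟩ | ⟨k, Ps, rfl⟩
  · rw [hpf] at hstep
    rw [dest_leaf] at hstep
    rcases s with ⟨o', a', q⟩ | ⟨k', o', c⟩
    · obtain ⟨rfl, rfl⟩ := hstep
      rcases q with p | hb
      · exact Or.inl ⟨a', rfl, ⟨p⟩⟩
      · exact absurd hb (by simp [ndπl])
    · exact hstep.elim
  · rw [hpf] at hstep
    rw [dest_node] at hstep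
    rcases s with ⟨o', a', q⟩ | ⟨k', o', c⟩
    · exact hstep.elim
    · obtain ⟨rfl, hk, hh⟩ := hstep
      cases k'
      cases k
      refine Or.inr ⟨Ps, rfl, ?_⟩
      cases o' with
      | may =>
          cases c with
          | and c₁ c₂ =>
            cases c₁ with
            | atom =>
              cases c₂ with
              | atom =>
                exact ⟨⟨ch _, hh (.left, .may) (Sel.At.andl (Sel.At.atom _))⟩,
                       ⟨ch _, hh (.right, .may) (Sel.At.andr (Sel.At.atom _))⟩⟩
      | must =>
          cases c with
          | orl c₁ =>
            cases c₁ with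
            | atom =>
              exact Or.inl ⟨ch _, hh (.left, .must) (Sel.At.orl (Sel.At.atom _))⟩
          | orr c₂ =>
            cases c₂ with
            | atom =>
              exact Or.inr ⟨ch _, hh (.right, .must) (Sel.At.orr (Sel.At.atom _))⟩

end NondetProof

namespace NondetProof
open CTree

noncomputable section NBtoBeta

variable {A : Type v} (P : A → Type w)

/-- Seeds for the corecursive construction of coinductive proof trees. -/
def BSeed : Type v :=
  Σ' (o : MM) (t : CT A), NB (fun a => Nonempty (P a)) o t

def selMay : Sel (ndπnd () MM.may) :=
  Sel.and (Sel.atom (LR.left, MM.may)) (Sel.atom (LR.right, MM.may))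

def selMustL : Sel (ndπnd () MM.must) := Sel.orl (Sel.atom (LR.left, MM.must))

def selMustR : Sel (ndπnd () MM.must) := Sel.orr (Sel.atom (LR.right, MM.must))

/-- A good one-step unfolding at a seed. -/
def Good (o : MM) (t : CT A) (obj : (BetaPF ndπl ndπnd P).Obj (BSeed P)) : Prop :=
  match obj, PFunctor.M.dest t with
  | ⟨Sum.inl ⟨o', a', _⟩, _⟩, ⟨Sum.inl a, _⟩ => o' = o ∧ a' = a
  | ⟨Sum.inr ⟨k', o', c⟩, ch⟩, ⟨Sum.inr k, ts⟩ =>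
      o' = o ∧ k' = k.down ∧
        ∀ (x : LR × MM) (hx : Sel.At c x),
          (ch ⟨⟨x, hx⟩⟩).1 = x.2 ∧ (ch ⟨⟨x, hx⟩⟩).2.1 = ts ⟨x.1⟩
  | _, _ => False

theorem good_exists (s : BSeed P) :
    Nonempty {obj : (BetaPF ndπl ndπnd P).Obj (BSeed P) // Good P s.1 s.2.1 obj} := by
  obtain ⟨o, t, h⟩ := s
  rcases NB_unfold h with ⟨a, rfl, ⟨p⟩⟩ | ⟨Ps, rfl, hb⟩
  · exact ⟨⟨Sum.inl ⟨o, a, PSum.inl p⟩, fun e => e.elim⟩, rfl, rfl⟩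
  · cases o with
    | may =>
        exact ⟨⟨Sum.inr ⟨(), .may, selMay⟩,
          fun y => match y.down with
            | ⟨_, .andl (.atom _)⟩ => ⟨.may, Ps .left, hb.1⟩
            | ⟨_, .andr (.atom _)⟩ => ⟨.may, Ps .right, hb.2⟩⟩,
          rfl, rfl, fun x hx => match hx with
            | .andl (.atom _) => ⟨rfl, rfl⟩
            | .andr (.atom _) => ⟨rfl, rfl⟩⟩
    | must =>
        rcases hb with hl | hr
        · exact ⟨⟨Sum.inr ⟨(), .must, selMustL⟩,
            fun y => match y.down with
              | ⟨_, .orl (.atom _)⟩ => ⟨.must, Ps .left, hl⟩⟩,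
            rfl, rfl, fun x hx => match hx with
              | .orl (.atom _) => ⟨rfl, rfl⟩⟩
        · exact ⟨⟨Sum.inr ⟨(), .must, selMustR⟩,
            fun y => match y.down with
              | ⟨_, .orr (.atom _)⟩ => ⟨.must, Ps .right, hr⟩⟩,
            rfl, rfl, fun x hx => match hx with
              | .orr (.atom _) => ⟨rfl, rfl⟩⟩

/-- The corecursion step. -/
def bstep (s : BSeed P) : (BetaPF ndπl ndπnd P).Obj (BSeed P) :=
  (Classical.choice (good_exists P s)).1

theorem bstep_good (s : BSeed P) : Good P s.1 s.2.1 (bstep P s) :=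
  (Classical.choice (good_exists P s)).2

/-- The corecursively constructed proof tree. -/
def bpf (s : BSeed P) : BetaPf ndπl ndπnd P :=
  PFunctor.M.corec (bstep P) s

theorem bseed_eq (p : BSeed P) {o : MM} {t : CT A} (h1 : p.1 = o) (h2 : p.2.1 = t) :
    ∃ hh : NB (fun a => Nonempty (P a)) o t, p = ⟨o, t, hh⟩ := by
  obtain ⟨o₃, t₃, h₃⟩ := p
  dsimp at h1 h2
  subst h1
  subst h2
  exact ⟨h₃, rfl⟩

theorem NB_to_beta {o : MM} {t : CT A} (h : NB (fun a => Nonempty (P a)) o t) :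
    Nonempty (Beta ndπl ndπnd P o t) := by
  refine ⟨bpf P ⟨o, t, h⟩,
    (fun pf' o' t' => ∃ h' : NB (fun a => Nonempty (P a)) o' t', pf' = bpf P ⟨o', t', h'⟩),
    fun pf' o' t' hr => ?_, h, rfl⟩
  obtain ⟨h', rfl⟩ := hr
  have hgd := bstep_good P ⟨o', t', h'⟩
  unfold BetaWFStep
  have hd : PFunctor.M.dest (bpf P ⟨o', t', h'⟩)
      = ⟨(bstep P ⟨o', t', h'⟩).1, fun b => bpf P ((bstep P ⟨o', t', h'⟩).2 b)⟩ := by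
    unfold bpf
    refine (PFunctor.M.dest_corec (bstep P) _).trans ?_
    rfl
  rcases hobj : bstep P ⟨o', t', h'⟩ with ⟨sh, ch⟩
  rw [hobj] at hd hgd
  dsimp only at hd
  unfold Good at hgd
  rcases leaf_or_node t' with ⟨a, rfl⟩ | ⟨k, Ps, rfl⟩
  · rw [hd, dest_leaf]
    rw [dest_leaf] at hgd
    rcases sh with ⟨o'', a', q⟩ | ⟨k', o'', c⟩
    · exact hgd
    · exact hgd.elim
  · rw [hd, dest_node]
    rw [dest_node] at hgd
    rcases sh with ⟨o'', a', q⟩ | ⟨k', o'', c⟩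
    · exact hgd.elim
    · obtain ⟨ho, hk, hh⟩ := hgd
      cases k
      cases k'
      refine ⟨ho, rfl, fun x hx => ?_⟩
      obtain ⟨e1, e2⟩ := hh x hx
      obtain ⟨hh', hp⟩ := bseed_eq P (ch ⟨⟨x, hx⟩⟩) e1 e2
      refine ⟨hh', ?_⟩
      show bpf P (ch ⟨⟨x, hx⟩⟩) = _
      rw [hp]

end NBtoBeta

end NondetProof

namespace NondetProof
open CTree

theorem algA_mu_iff (d : CT (CT Type)) (o : MM) :
    Nonempty (algA ndπl ndπn o (CTree.mu d)) ↔
      Nonempty (liftTree ndπl ndπn o (algA ndπl ndπn o) d) := by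
  constructor
  · intro h
    have h1 : NA (fun X => Nonempty X) o (CTree.mu d) :=
      h.elim fun x => alpha_to_NA (P := fun X => X) x
    have h2 := NA_mu_fwd h1
    have h3 : NA (fun t => Nonempty (algA ndπl ndπn o t)) o d :=
      NA_mono (fun t ht => NA_to_alpha (P := fun X => X) ht) h2
    exact NA_to_alpha (P := algA ndπl ndπn o) h3
  · intro h
    have h1 : NA (fun t => Nonempty (algA ndπl ndπn o t)) o d :=
      h.elim fun y => alpha_to_NA (P := algA ndπl ndπn o) y
    have h2 : NA (fun t => NA (fun X => Nonempty X) o t) o d :=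
      NA_mono (fun t ht => ht.elim fun x => alpha_to_NA (P := fun X => X) x) h1
    exact NA_to_alpha (P := fun X => X) (NA_mu_bwd h2)

theorem algB_mu_iff (d : CT (CT Type)) (o : MM) :
    Nonempty (algB ndπl ndπn o (CTree.mu d)) ↔
      Nonempty (coliftTree ndπl ndπn o (algB ndπl ndπn o) d) := by
  constructor
  · intro h
    have h1 : NB (fun X => Nonempty X) o (CTree.mu d) := beta_to_NB (P := fun X => X) h
    have h2 := NB_mu_fwd h1
    have h3 : NB (fun t => Nonempty (algB ndπl ndπn o t)) o d :=
      NB_mono (fun t ht => NB_to_beta (fun X => X) ht) h2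
    exact NB_to_beta (algB ndπl ndπn o) h3
  · intro h
    have h1 : NB (fun t => Nonempty (algB ndπl ndπn o t)) o d :=
      beta_to_NB (P := algB ndπl ndπn o) h
    have h2 : NB (fun t => NB (fun X => Nonempty X) o t) o d :=
      NB_mono (fun t ht => beta_to_NB (P := fun X => X) ht) h1
    exact NB_to_beta (fun X => X) (NB_mu_bwd h2)

end NondetProof

/-- for nondeterminism, `ndπd` is an `α`-decomposition, its dual
is a `β`-decomposition, and consequently the triple is strongly decomposable. -/
theorem nondet_decomposable :
    Nonempty (IsAlphaDecomposition ndπl ndπn ndπd ×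
      IsBetaDecomposition ndπl ndπn (fun o => dualTest (ndπd o)) ×
      StronglyDecomposable ndπl ndπn) := by
  constructor
  refine ⟨fun d o => ?_, fun d o => ?_, fun d₀ d₁ hle o => ?_⟩
  · exact ⟨fun x => Classical.choice ((NondetProof.algA_mu_iff d o).mp ⟨x⟩),
      fun y => Classical.choice ((NondetProof.algA_mu_iff d o).mpr ⟨y⟩)⟩
  · exact ⟨fun x => Classical.choice ((NondetProof.algB_mu_iff d o).mp ⟨x⟩),
      fun y => Classical.choice ((NondetProof.algB_mu_iff d o).mpr ⟨y⟩)⟩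
  · exact ⟨fun x => Classical.choice ((NondetProof.algA_mu_iff d₁ o).mpr
        (((NondetProof.algA_mu_iff d₀ o).mp ⟨x⟩).map (hle o o).1)),
      fun x => Classical.choice ((NondetProof.algB_mu_iff d₁ o).mpr
        (((NondetProof.algB_mu_iff d₀ o).mp ⟨x⟩).map (hle o o).2))⟩
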